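/- Let 0 < a < b, 1 < σ ≤ 2, λ ∈ ℝ with |λ| < σ^{σ+1}·Γ(σ)/((σ−1)^{σ−1}·(ln(b/a))^{σ}), and let G be the Green's function G(x,τ) = (1/Γ(σ))·[((ln(x/a)/ln(b/a))^{σ−1}·(ln(b/τ))^{σ−1} − (ln(x/τ))^{σ−1})/τ] for a ≤ τ ≤ x ≤ b, and G(x,τ) = (1/Γ(σ))·(ln(x/a)/ln(b/a))^{σ−1}·(ln(b/τ))^{σ−1}/τ for a ≤ x ≤ τ ≤ b. Then the only continuous function u : [a,b] → ℝ satisfying u(x) = λ·∫_a^b G(x,τ)·u(τ) dτ for all x ∈ [a,b] is u ≡ 0. -/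

import Mathlib

open Real Set intervalIntegral

lemma antider (a c σ : ℝ) (ha : 0 < a) (hac : a ≤ c) (hσ : 1 < σ) :
    ∫ τ in a..c, (Real.log c - Real.log τ) ^ (σ - 1) / τ
      = (Real.log c - Real.log a) ^ σ / σ := by
  have hσ0 : (0:ℝ) < σ := by linarith
  have hc : 0 < c := lt_of_lt_of_le ha hac
  have key : ∫ τ in a..c, (Real.log c - Real.log τ) ^ (σ - 1) / τ
      = (fun τ : ℝ => -(Real.log c - Real.log τ) ^ σ / σ) c
        - (fun τ : ℝ => -(Real.log c - Real.log τ) ^ σ / σ) a := by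
    refine intervalIntegral.integral_eq_sub_of_hasDerivAt_of_le
      (f := fun τ : ℝ => -(Real.log c - Real.log τ) ^ σ / σ)
      (f' := fun τ : ℝ => (Real.log c - Real.log τ) ^ (σ - 1) / τ) hac ?_ ?_ ?_
    · apply ContinuousOn.div_const
      apply ContinuousOn.neg
      apply ContinuousOn.rpow_const
      · exact continuousOn_const.sub (Real.continuousOn_log.mono
          (fun τ hτ => ne_of_gt (lt_of_lt_of_le ha hτ.1)))
      · exact fun τ _ => Or.inr hσ0.le
    · intro τ hτ
      have hτ0 : 0 < τ := ha.trans hτ.1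
      have hlog : 0 < Real.log c - Real.log τ := by
        have := Real.log_lt_log hτ0 hτ.2
        linarith
      have h1 : HasDerivAt (fun τ : ℝ => Real.log c - Real.log τ) (-τ⁻¹) τ :=
        (Real.hasDerivAt_log hτ0.ne').const_sub (Real.log c)
      have h2 := (HasDerivAt.rpow_const (p := σ) h1 (Or.inl hlog.ne')).neg.div_const σ
      convert h2 using 1
      · rfl
      · rfl
      rw [eq_div_iff hσ0.ne']
      ring
    · apply ContinuousOn.intervalIntegrable_of_Icc hac
      apply ContinuousOn.div
      · apply ContinuousOn.rpow_const
        · exact continuousOn_const.sub (Real.continuousOn_log.mono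
            (fun τ hτ => ne_of_gt (lt_of_lt_of_le ha hτ.1)))
        · exact fun τ _ => Or.inr (by linarith)
      · exact continuousOn_id
      · exact fun τ hτ => ne_of_gt (lt_of_lt_of_le ha hτ.1)
  rw [key]
  simp only [sub_self, Real.zero_rpow hσ0.ne']
  ring

lemma amgm (σ L y : ℝ) (hσ : 1 < σ) (hy : 0 ≤ y) (hyL : y ≤ L) :
    y ^ (σ - 1) * (L - y) ≤ (σ - 1) ^ (σ - 1) * L ^ σ / σ ^ σ := by
  have hσ0 : (0:ℝ) < σ := by linarith
  have hσ1 : (0:ℝ) < σ - 1 := by linarith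
  have hL0 : 0 ≤ L := hy.trans hyL
  have hLy : 0 ≤ L - y := by linarith
  set p₁ : ℝ := σ * y / (σ - 1) with hp₁def
  set p₂ : ℝ := σ * (L - y) with hp₂def
  have hp₁ : 0 ≤ p₁ := by positivity
  have hp₂ : 0 ≤ p₂ := by positivity
  have hw : (σ - 1) / σ + 1 / σ = 1 := by field_simp; ring
  have h := Real.geom_mean_le_arith_mean2_weighted
    (by positivity : (0:ℝ) ≤ (σ - 1)/σ) (by positivity : (0:ℝ) ≤ 1/σ) hp₁ hp₂ hw
  have harith : (σ - 1)/σ * p₁ + 1/σ * p₂ = L := by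
    rw [hp₁def, hp₂def]
    field_simp
    ring
  rw [harith] at h
  have h2 : (p₁ ^ ((σ-1)/σ) * p₂ ^ (1/σ)) ^ σ ≤ L ^ σ :=
    Real.rpow_le_rpow (by positivity) h hσ0.le
  have hexp : (p₁ ^ ((σ-1)/σ) * p₂ ^ (1/σ)) ^ σ = p₁ ^ (σ - 1) * p₂ := by
    rw [Real.mul_rpow (by positivity) (by positivity), ← Real.rpow_mul hp₁,
      ← Real.rpow_mul hp₂, div_mul_cancel₀ _ hσ0.ne', one_div, inv_mul_cancel₀ hσ0.ne',
      Real.rpow_one]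
  rw [hexp] at h2
  -- p₁ ^ (σ-1) = (σ/(σ-1))^(σ-1) * y^(σ-1)
  have hp1e : p₁ ^ (σ - 1) = (σ / (σ - 1)) ^ (σ - 1) * y ^ (σ - 1) := by
    rw [hp₁def, ← Real.mul_rpow (by positivity) hy]
    ring_nf
  rw [hp1e, hp₂def] at h2
  -- so (σ/(σ-1))^(σ-1) * y^(σ-1) * (σ * (L - y)) ≤ L^σ
  have hc0 : (0:ℝ) < (σ / (σ - 1)) ^ (σ - 1) := Real.rpow_pos_of_pos (by positivity) _
  have hce : (σ / (σ - 1)) ^ (σ - 1) = σ ^ (σ - 1) / (σ - 1) ^ (σ - 1) :=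
    Real.div_rpow hσ0.le hσ1.le _
  have hσσ : σ ^ σ = σ ^ (σ - 1) * σ := by
    rw [← Real.rpow_add_one hσ0.ne' (σ - 1)]
    norm_num
  have hs1 : (0:ℝ) < σ ^ (σ - 1) := Real.rpow_pos_of_pos hσ0 _
  have hs2 : (0:ℝ) < (σ - 1) ^ (σ - 1) := Real.rpow_pos_of_pos hσ1 _
  rw [hce] at h2
  have he : σ ^ (σ-1) / (σ-1) ^ (σ-1) * y ^ (σ-1) * (σ * (L - y))
      = (σ ^ (σ-1) * y ^ (σ-1) * (σ * (L - y))) / (σ-1) ^ (σ-1) := by ring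
  rw [he, div_le_iff₀ hs2] at h2
  rw [le_div_iff₀ (by positivity : (0:ℝ) < σ ^ σ), hσσ]
  nlinarith [h2]

theorem stmt_10 (a b σ lam : ℝ) (ha : 0 < a) (hab : a < b) (hσ1 : 1 < σ) (hσ2 : σ ≤ 2)
    (hlam : |lam| < σ ^ (σ + 1) * Real.Gamma σ / ((σ - 1) ^ (σ - 1) * (Real.log (b / a)) ^ σ))
    (G : ℝ → ℝ → ℝ)
    (hG : ∀ x τ, G x τ =
      if τ ≤ x then
        (1 / Real.Gamma σ) *
          (((Real.log (x / a) / Real.log (b / a)) ^ (σ - 1) * (Real.log (b / τ)) ^ (σ - 1)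
            - (Real.log (x / τ)) ^ (σ - 1)) / τ)
      else
        (1 / Real.Gamma σ) *
          ((Real.log (x / a) / Real.log (b / a)) ^ (σ - 1) * (Real.log (b / τ)) ^ (σ - 1) / τ))
    (u : ℝ → ℝ) (hu : ContinuousOn u (Icc a b))
    (heq : ∀ x ∈ Icc a b, u x = lam * ∫ τ in a..b, G x τ * u τ) :
    ∀ x ∈ Icc a b, u x = 0 := by
  have hb : 0 < b := ha.trans hab
  have hσ0 : (0:ℝ) < σ := by linarith
  have hσ1' : (0:ℝ) < σ - 1 := by linarith
  have hΓ : 0 < Real.Gamma σ := Real.Gamma_pos_of_pos hσ0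
  set L : ℝ := Real.log (b / a) with hLdef
  have hL0 : 0 < L := Real.log_pos ((one_lt_div ha).mpr hab)
  -- closed form for G on the square
  have hG' : ∀ x ∈ Icc a b, ∀ τ : ℝ, 0 < τ → G x τ =
      (1 / Real.Gamma σ) *
        (((Real.log (x / a) / L) ^ (σ - 1) * (Real.log (b / τ)) ^ (σ - 1)
          - (Real.log (max (x / τ) 1)) ^ (σ - 1)) / τ) := by
    intro x hx τ hτ0
    have hx0 : 0 < x := lt_of_lt_of_le ha hx.1
    rw [hG]
    by_cases h : τ ≤ x
    · have hm : max (x / τ) 1 = x / τ := max_eq_left ((one_le_div hτ0).mpr h)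
      rw [if_pos h, hm]
    · have hm : max (x / τ) 1 = 1 :=
        max_eq_right (le_of_lt ((div_lt_one hτ0).mpr (not_le.mp h)))
      rw [if_neg h, hm, Real.log_one, Real.zero_rpow hσ1'.ne', sub_zero]
  -- continuity of G x on [a,b]
  have hGcont : ∀ x ∈ Icc a b, ContinuousOn (fun τ => G x τ) (Icc a b) := by
    intro x hx
    have hτne : ∀ τ ∈ Icc a b, τ ≠ 0 := fun τ hτ => (lt_of_lt_of_le ha hτ.1).ne'
    have hc : ContinuousOn (fun τ : ℝ =>
        (1 / Real.Gamma σ) *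
          (((Real.log (x / a) / L) ^ (σ - 1) * (Real.log (b / τ)) ^ (σ - 1)
            - (Real.log (max (x / τ) 1)) ^ (σ - 1)) / τ)) (Icc a b) := by
      apply ContinuousOn.mul continuousOn_const
      apply ContinuousOn.div _ continuousOn_id hτne
      apply ContinuousOn.sub
      · apply ContinuousOn.mul continuousOn_const
        apply ContinuousOn.rpow_const _ (fun τ _ => Or.inr hσ1'.le)
        apply ContinuousOn.log (continuousOn_const.div continuousOn_id hτne)
        exact fun τ hτ => (div_pos hb (lt_of_lt_of_le ha hτ.1)).ne'
      · apply ContinuousOn.rpow_const _ (fun τ _ => Or.inr hσ1'.le)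
        apply ContinuousOn.log
        · exact (continuousOn_const.div continuousOn_id hτne).sup continuousOn_const
        · intro τ hτ
          have : (1:ℝ) ≤ max (x / τ) 1 := le_max_right _ _
          positivity
    exact hc.congr (fun τ hτ => hG' x hx τ (lt_of_lt_of_le ha hτ.1))
  -- nonnegativity of G
  have hGnn : ∀ x ∈ Icc a b, ∀ τ ∈ Icc a b, 0 ≤ G x τ := by
    intro x hx τ hτ
    have hτ0 : 0 < τ := lt_of_lt_of_le ha hτ.1
    have hx0 : 0 < x := lt_of_lt_of_le ha hx.1
    rw [hG' x hx τ hτ0]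
    apply mul_nonneg (by positivity)
    apply div_nonneg _ hτ0.le
    rw [sub_nonneg]
    have hX : 0 ≤ Real.log (x / a) := Real.log_nonneg ((one_le_div ha).mpr hx.1)
    have hBτ : 0 ≤ Real.log (b / τ) := Real.log_nonneg ((one_le_div hτ0).mpr hτ.2)
    rw [← Real.mul_rpow (by positivity) hBτ]
    apply Real.rpow_le_rpow (Real.log_nonneg (le_max_right _ _)) _ hσ1'.le
    by_cases h : τ ≤ x
    · rw [max_eq_left ((one_le_div hτ0).mpr h)]
      rw [Real.log_div hx0.ne' hτ0.ne', Real.log_div hx0.ne' ha.ne',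
        Real.log_div hb.ne' hτ0.ne', hLdef, Real.log_div hb.ne' ha.ne']
      rw [div_mul_eq_mul_div, le_div_iff₀ (by
        rw [hLdef, Real.log_div hb.ne' ha.ne'] at hL0
        exact hL0)]
      have h1 : Real.log a ≤ Real.log τ := Real.log_le_log ha hτ.1
      have h2 : Real.log x ≤ Real.log b := Real.log_le_log hx0 hx.2
      nlinarith [mul_nonneg (sub_nonneg.2 h1) (sub_nonneg.2 h2)]
    · rw [max_eq_right (le_of_lt ((div_lt_one hτ0).mpr (not_le.mp h))), Real.log_one]
      positivity
  -- value/bound of the integral of G x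
  have hIle : ∀ x ∈ Icc a b, (∫ τ in a..b, G x τ)
      ≤ (σ - 1) ^ (σ - 1) * L ^ σ / (σ ^ (σ + 1) * Real.Gamma σ) := by
    intro x hx
    have hx0 : 0 < x := lt_of_lt_of_le ha hx.1
    have hτne : ∀ τ ∈ Icc a b, τ ≠ 0 := fun τ hτ => (lt_of_lt_of_le ha hτ.1).ne'
    set p : ℝ := (Real.log (x / a) / L) ^ (σ - 1) with hpdef
    set f1 : ℝ → ℝ := fun τ => (1 / Real.Gamma σ) * p *
      ((Real.log b - Real.log τ) ^ (σ - 1) / τ) with hf1def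
    set f2 : ℝ → ℝ := fun τ => (1 / Real.Gamma σ) *
      ((Real.log (max (x / τ) 1)) ^ (σ - 1) / τ) with hf2def
    have hf1cont : ContinuousOn f1 (Icc a b) := by
      apply ContinuousOn.mul continuousOn_const
      apply ContinuousOn.div _ continuousOn_id hτne
      apply ContinuousOn.rpow_const _ (fun τ _ => Or.inr hσ1'.le)
      exact continuousOn_const.sub (Real.continuousOn_log.mono hτne)
    have hf2cont : ContinuousOn f2 (Icc a b) := by
      apply ContinuousOn.mul continuousOn_const
      apply ContinuousOn.div _ continuousOn_id hτne
      apply ContinuousOn.rpow_const _ (fun τ _ => Or.inr hσ1'.le)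
      apply ContinuousOn.log
      · exact (continuousOn_const.div continuousOn_id hτne).sup continuousOn_const
      · intro τ hτ
        have : (1:ℝ) ≤ max (x / τ) 1 := le_max_right _ _
        positivity
    have hsplit : (∫ τ in a..b, G x τ) = (∫ τ in a..b, f1 τ) - ∫ τ in a..b, f2 τ := by
      rw [← intervalIntegral.integral_sub
        (hf1cont.intervalIntegrable_of_Icc hab.le)
        (hf2cont.intervalIntegrable_of_Icc hab.le)]
      apply intervalIntegral.integral_congr
      rw [Set.uIcc_of_le hab.le]
      intro τ hτ
      have hτ0 : 0 < τ := lt_of_lt_of_le ha hτ.1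
      rw [hG' x hx τ hτ0, hf1def, hf2def]
      simp only
      rw [Real.log_div hb.ne' hτ0.ne']
      ring
    have hI1 : (∫ τ in a..b, f1 τ)
        = (1 / Real.Gamma σ) * p * ((Real.log b - Real.log a) ^ σ / σ) := by
      rw [hf1def]
      rw [intervalIntegral.integral_const_mul]
      rw [antider a b σ ha hab.le hσ1]
    have hI2 : (∫ τ in a..b, f2 τ)
        = (1 / Real.Gamma σ) * ((Real.log x - Real.log a) ^ σ / σ) := by
      rw [hf2def]
      rw [intervalIntegral.integral_const_mul]
      have hsub : (∫ τ in a..b, (Real.log (max (x / τ) 1)) ^ (σ - 1) / τ)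
          = (∫ τ in a..x, (Real.log (max (x / τ) 1)) ^ (σ - 1) / τ)
            + ∫ τ in x..b, (Real.log (max (x / τ) 1)) ^ (σ - 1) / τ := by
        have hgc : ContinuousOn (fun τ => (Real.log (max (x / τ) 1)) ^ (σ - 1) / τ)
            (Icc a b) := by
          apply ContinuousOn.div _ continuousOn_id hτne
          apply ContinuousOn.rpow_const _ (fun τ _ => Or.inr hσ1'.le)
          apply ContinuousOn.log
          · exact (continuousOn_const.div continuousOn_id hτne).sup continuousOn_const
          · intro τ hτ
            have : (1:ℝ) ≤ max (x / τ) 1 := le_max_right _ _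
            positivity
        exact (intervalIntegral.integral_add_adjacent_intervals
          ((hgc.mono (Icc_subset_Icc le_rfl hx.2)).intervalIntegrable_of_Icc hx.1)
          ((hgc.mono (Icc_subset_Icc hx.1 le_rfl)).intervalIntegrable_of_Icc hx.2)).symm
      rw [hsub]
      have hA : (∫ τ in a..x, (Real.log (max (x / τ) 1)) ^ (σ - 1) / τ)
          = (Real.log x - Real.log a) ^ σ / σ := by
        rw [← antider a x σ ha hx.1 hσ1]
        apply intervalIntegral.integral_congr
        rw [Set.uIcc_of_le hx.1]
        intro τ hτ
        have hτ0 : 0 < τ := lt_of_lt_of_le ha hτ.1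
        show (Real.log (max (x / τ) 1)) ^ (σ - 1) / τ = (Real.log x - Real.log τ) ^ (σ - 1) / τ
        rw [max_eq_left ((one_le_div hτ0).mpr hτ.2), Real.log_div hx0.ne' hτ0.ne']
      have hB : (∫ τ in x..b, (Real.log (max (x / τ) 1)) ^ (σ - 1) / τ) = 0 := by
        have : EqOn (fun τ => (Real.log (max (x / τ) 1)) ^ (σ - 1) / τ)
            (fun _ => (0:ℝ)) (uIcc x b) := by
          rw [Set.uIcc_of_le hx.2]
          intro τ hτ
          have hτ0 : 0 < τ := hx0.trans_le hτ.1
          have hm : max (x / τ) 1 = 1 := max_eq_right ((div_le_one hτ0).mpr hτ.1)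
          simp [hm, Real.zero_rpow hσ1'.ne']
        rw [intervalIntegral.integral_congr this]
        simp
      rw [hA, hB, add_zero]
    rw [hsplit, hI1, hI2]
    -- core inequality
    set X : ℝ := Real.log x - Real.log a with hXdef
    have hXnn : 0 ≤ X := sub_nonneg.2 (Real.log_le_log ha hx.1)
    have hXL : X ≤ L := by
      rw [hLdef, Real.log_div hb.ne' ha.ne']
      have := Real.log_le_log hx0 hx.2
      linarith
    have hLe : Real.log b - Real.log a = L := by
      rw [hLdef, Real.log_div hb.ne' ha.ne']
    have hXe : Real.log (x / a) = X := Real.log_div hx0.ne' ha.ne'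
    rw [hLe]
    have hcore : p * L ^ σ - X ^ σ ≤ (σ - 1) ^ (σ - 1) * L ^ σ / σ ^ σ := by
      rcases eq_or_lt_of_le hXnn with hX0 | hX0
      · rw [hpdef, hXe, ← hX0]
        rw [zero_div, Real.zero_rpow hσ1'.ne', Real.zero_rpow hσ0.ne']
        simp only [zero_mul, sub_zero]
        positivity
      · have hpL : p * L ^ σ = X ^ (σ - 1) * L := by
          rw [hpdef, hXe, Real.div_rpow hXnn hL0.le]
          have hLσ : L ^ σ = L ^ (σ - 1) * L := by
            rw [← Real.rpow_add_one hL0.ne' (σ - 1)]; norm_num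
          rw [hLσ]
          field_simp
        have hXσ : X ^ σ = X ^ (σ - 1) * X := by
          rw [← Real.rpow_add_one hX0.ne' (σ - 1)]; norm_num
        rw [hpL, hXσ, ← mul_sub]
        exact amgm σ L X hσ1 hXnn hXL
    have hσσ1 : σ ^ (σ + 1) = σ ^ σ * σ := Real.rpow_add_one hσ0.ne' σ
    have e1 : 1 / Real.Gamma σ * p * (L ^ σ / σ) - 1 / Real.Gamma σ * (X ^ σ / σ)
        = (p * L ^ σ - X ^ σ) / (σ * Real.Gamma σ) := by
      rw [eq_div_iff (ne_of_gt (by positivity : (0:ℝ) < σ * Real.Gamma σ))]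
      field_simp
    have e2 : (σ - 1) ^ (σ - 1) * L ^ σ / (σ ^ (σ + 1) * Real.Gamma σ)
        = ((σ - 1) ^ (σ - 1) * L ^ σ / σ ^ σ) / (σ * Real.Gamma σ) := by
      rw [hσσ1]
      have hσs : (0:ℝ) < σ ^ σ := Real.rpow_pos_of_pos hσ0 _
      field_simp
    rw [e1, e2]
    apply div_le_div_of_nonneg_right hcore (by positivity)
  -- contraction argument
  obtain ⟨x₀, hx₀, hmax⟩ := isCompact_Icc.exists_isMaxOn (nonempty_Icc.mpr hab.le) hu.abs
  have hM : ∀ y ∈ Icc a b, |u y| ≤ |u x₀| := hmax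
  set M : ℝ := |u x₀| with hMdef
  have hM0 : 0 ≤ M := abs_nonneg _
  set K : ℝ := (σ - 1) ^ (σ - 1) * L ^ σ / (σ ^ (σ + 1) * Real.Gamma σ) with hKdef
  have h1p : (0:ℝ) < (σ - 1) ^ (σ - 1) := Real.rpow_pos_of_pos hσ1' _
  have h2p : (0:ℝ) < L ^ σ := Real.rpow_pos_of_pos hL0 _
  have h3p : (0:ℝ) < σ ^ (σ + 1) := Real.rpow_pos_of_pos hσ0 _
  have hK0 : 0 < K := by rw [hKdef]; positivity
  have hcontr : M ≤ |lam| * (K * M) := by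
    have hGMc : ContinuousOn (fun τ => G x₀ τ * M) (Icc a b) :=
      (hGcont x₀ hx₀).mul continuousOn_const
    have huGc : ContinuousOn (fun τ => G x₀ τ * u τ) (Icc a b) :=
      (hGcont x₀ hx₀).mul hu
    have step1 : |∫ τ in a..b, G x₀ τ * u τ| ≤ ∫ τ in a..b, |G x₀ τ * u τ| :=
      intervalIntegral.abs_integral_le_integral_abs hab.le
    have step2 : (∫ τ in a..b, |G x₀ τ * u τ|) ≤ ∫ τ in a..b, G x₀ τ * M := by
      apply intervalIntegral.integral_mono_on hab.le
        (huGc.abs.intervalIntegrable_of_Icc hab.le)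
        (hGMc.intervalIntegrable_of_Icc hab.le)
      intro τ hτ
      rw [abs_mul, abs_of_nonneg (hGnn x₀ hx₀ τ hτ)]
      exact mul_le_mul_of_nonneg_left (hM τ hτ) (hGnn x₀ hx₀ τ hτ)
    have step3 : (∫ τ in a..b, G x₀ τ * M) = (∫ τ in a..b, G x₀ τ) * M :=
      intervalIntegral.integral_mul_const M _
    have step4 : (∫ τ in a..b, G x₀ τ) * M ≤ K * M :=
      mul_le_mul_of_nonneg_right (hIle x₀ hx₀) hM0
    calc M = |u x₀| := hMdef
      _ = |lam * ∫ τ in a..b, G x₀ τ * u τ| := by rw [← heq x₀ hx₀]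
      _ = |lam| * |∫ τ in a..b, G x₀ τ * u τ| := abs_mul _ _
      _ ≤ |lam| * (K * M) := by
          apply mul_le_mul_of_nonneg_left _ (abs_nonneg lam)
          calc |∫ τ in a..b, G x₀ τ * u τ| ≤ ∫ τ in a..b, |G x₀ τ * u τ| := step1
            _ ≤ ∫ τ in a..b, G x₀ τ * M := step2
            _ = (∫ τ in a..b, G x₀ τ) * M := step3
            _ ≤ K * M := step4
  have hlamK : |lam| * K < 1 := by
    have hst : |lam| * K < (σ ^ (σ + 1) * Real.Gamma σ / ((σ - 1) ^ (σ - 1) * L ^ σ)) * K :=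
      mul_lt_mul_of_pos_right hlam hK0
    have hone : (σ ^ (σ + 1) * Real.Gamma σ / ((σ - 1) ^ (σ - 1) * L ^ σ)) * K = 1 := by
      rw [hKdef]
      field_simp
    rw [hone] at hst
    exact hst
  have hMz : M = 0 := by nlinarith [hcontr, hlamK, hM0]
  intro x hx
  have hx' : |u x| ≤ 0 := hMz ▸ hM x hx
  exact abs_nonpos_iff.mp hx'
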